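/- For every ε > 0, m ≥ 0, and t ∈ εℤ₊, we have Σ_{x∈εℤ} a(x,t,m,ε) = i·exp(−i·((t−ε)/ε)·arctan(mε)). -/

import Mathlib

noncomputable section

/-- The `i`-th move of a checker path encoded as `f : Fin n → Bool`
(`true` = upwards-right move `(ε,ε)`, `false` = upwards-left move `(−ε,ε)`);
out-of-range indices default to `true`. -/
def fcStep {n : ℕ} (f : Fin n → Bool) (i : ℕ) : Bool :=
  if h : i < n then f ⟨i, h⟩ else true

/-- The number of turns of the checker path `f`. -/
def fcTurns {n : ℕ} (f : Fin n → Bool) : ℕ :=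
  ((Finset.range (n - 1)).filter fun i => fcStep f i ≠ fcStep f (i + 1)).card

/-- The position (in units of `ε`) of the checker path `f` after `i` moves,
starting from the origin. -/
def fcPos {n : ℕ} (f : Fin n → Bool) (i : ℕ) : ℤ :=
  ∑ j ∈ Finset.range i, (if fcStep f j then (1 : ℤ) else -1)

/-- Checker paths from `(0,0)` to `(εx, εn)` whose first step is to `(ε,ε)`. -/
def fcPaths (n : ℕ) (x : ℤ) : Finset (Fin n → Bool) :=
  Finset.univ.filter fun f =>
    (∀ i : Fin n, (i : ℕ) = 0 → f i = true) ∧ fcPos f n = x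

/-- The amplitude `a(εx, εn, m, ε)`. -/
def fcAmp (m ε : ℝ) (x : ℤ) (n : ℕ) : ℂ :=
  (((1 + m ^ 2 * ε ^ 2) ^ ((1 - (n : ℝ)) / 2) : ℝ) : ℂ) * Complex.I *
    ∑ f ∈ fcPaths n x, (-Complex.I * (m * ε)) ^ fcTurns f

/-- The probability `P(εx, εn, m, ε)` to find the electron at `(εx, εn)`. -/
def fcP (m ε : ℝ) (x : ℤ) (n : ℕ) : ℝ := ‖fcAmp m ε x n‖ ^ 2

def fcS (n : ℕ) : Finset (Fin n → Bool) :=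
  Finset.univ.filter fun f => ∀ i : Fin n, (i : ℕ) = 0 → f i = true

def fcT {n : ℕ} (f : Fin n → Bool) : Finset ℕ :=
  (Finset.range (n - 1)).filter fun i => fcStep f i ≠ fcStep f (i + 1)

def fcF (n : ℕ) (t : Finset ℕ) : Fin n → Bool :=
  fun i => decide ((t.filter fun j => j < (i : ℕ)).card % 2 = 0)

lemma card_filter_lt_succ (t : Finset ℕ) (j : ℕ) :
    (t.filter fun x => x < j + 1).card
      = (t.filter fun x => x < j).card + (if j ∈ t then 1 else 0) := by
  have h1 : (t.filter fun x => x < j + 1)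
      = (t.filter fun x => x < j) ∪ (t.filter fun x => x = j) := by
    rw [← Finset.filter_or]
    apply Finset.filter_congr
    intro x _
    omega
  have h2 : Disjoint (t.filter fun x => x < j) (t.filter fun x => x = j) := by
    rw [Finset.disjoint_left]
    intro x hx hx'
    simp only [Finset.mem_filter] at hx hx'
    omega
  rw [h1, Finset.card_union_of_disjoint h2]
  congr 1
  by_cases hj : j ∈ t
  · simp [Finset.filter_eq', hj]
  · simp [Finset.filter_eq', hj]

lemma fcStep_fcF (n : ℕ) (t : Finset ℕ) (i : ℕ) (hi : i < n) :
    fcStep (fcF n t) i = decide ((t.filter fun j => j < i).card % 2 = 0) := by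
  simp [fcStep, fcF, hi]

lemma fcT_fcF (n : ℕ) (t : Finset ℕ) (ht : t ⊆ Finset.range (n - 1)) :
    fcT (fcF n t) = t := by
  ext i
  simp only [fcT, Finset.mem_filter, Finset.mem_range]
  constructor
  · rintro ⟨hi, hne⟩
    rw [fcStep_fcF n t i (by omega), fcStep_fcF n t (i + 1) (by omega),
      card_filter_lt_succ] at hne
    by_cases h : i ∈ t
    · exact h
    · simp only [h, if_false, add_zero, ne_eq, not_true_eq_false] at hne
  · intro h
    have hi : i < n - 1 := Finset.mem_range.mp (ht h)
    refine ⟨hi, ?_⟩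
    rw [fcStep_fcF n t i (by omega), fcStep_fcF n t (i + 1) (by omega),
      card_filter_lt_succ]
    simp only [h, if_pos, ne_eq, decide_eq_decide]
    omega

lemma fcF_fcT {n : ℕ} (f : Fin n → Bool) (hf : ∀ i : Fin n, (i : ℕ) = 0 → f i = true) :
    fcF n (fcT f) = f := by
  have key : ∀ j (hj : j < n), fcF n (fcT f) ⟨j, hj⟩ = f ⟨j, hj⟩ := by
    intro j
    induction j with
    | zero =>
      intro hj
      rw [hf ⟨0, hj⟩ rfl]
      simp [fcF]
    | succ j ih =>
      intro hj
      have hj' : j < n := by omega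
      have ihv := ih hj'
      have hmem : (j ∈ fcT f) ↔ ¬(f ⟨j, hj'⟩ = f ⟨j + 1, hj⟩) := by
        have hjn : j < n - 1 := by omega
        rw [fcT, Finset.mem_filter, Finset.mem_range, fcStep, fcStep, dif_pos hj', dif_pos hj]
        simp [hjn]
      simp only [fcF] at ihv ⊢
      rw [card_filter_lt_succ]
      cases h1 : f ⟨j, hj'⟩ <;> cases h2 : f ⟨j + 1, hj⟩ <;>
        simp [h1, h2] at ihv hmem ⊢ <;>
        simp [hmem] <;>
        omega
  funext i
  have := key i i.2
  simpa using this

lemma fcF_mem_fcS (n : ℕ) (t : Finset ℕ) : fcF n t ∈ fcS n := by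
  simp only [fcS, Finset.mem_filter, Finset.mem_univ, true_and]
  intro i hi
  simp [fcF, hi]

lemma sum_fcS (n : ℕ) (z : ℂ) :
    ∑ f ∈ fcS n, z ^ fcTurns f = (z + 1) ^ (n - 1) := by
  have h : (z + 1) ^ (n - 1) = ∑ t ∈ (Finset.range (n - 1)).powerset, z ^ t.card := by
    have h0 := Finset.prod_add (fun _ : ℕ => z) (fun _ => (1 : ℂ)) (Finset.range (n - 1))
    simpa using h0
  rw [h]
  apply Finset.sum_nbij' (fun f => fcT f) (fun t => fcF n t)
  · intro f _
    exact Finset.mem_powerset.mpr (Finset.filter_subset _ _)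
  · intro t _
    exact fcF_mem_fcS n t
  · intro f hf
    exact fcF_fcT f ((Finset.mem_filter.mp hf).2)
  · intro t ht
    exact fcT_fcF n t (Finset.mem_powerset.mp ht)
  · intro f _
    rfl

lemma fcPaths_eq (n : ℕ) (x : ℤ) :
    fcPaths n x = (fcS n).filter fun f => fcPos f n = x := by
  simp [fcPaths, fcS, Finset.filter_filter]

lemma abs_fcPos_le {n : ℕ} (f : Fin n → Bool) : |fcPos f n| ≤ n := by
  calc |fcPos f n| ≤ ∑ j ∈ Finset.range n, |if fcStep f j then (1 : ℤ) else -1| :=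
        Finset.abs_sum_le_sum_abs _ _
  _ = n := by simp [apply_ite (abs : ℤ → ℤ)]


lemma hE (x : ℝ) :
    ((Real.sqrt (1 + x ^ 2) : ℝ) : ℂ) * Complex.exp (-Complex.I * (Real.arctan x : ℂ))
      = 1 - Complex.I * x := by
  have h1 : -Complex.I * (Real.arctan x : ℂ) = ((-Real.arctan x : ℝ) : ℂ) * Complex.I := by
    push_cast; ring
  rw [h1, Complex.exp_mul_I, ← Complex.ofReal_cos, ← Complex.ofReal_sin,
    Real.cos_neg, Real.sin_neg, Real.cos_arctan, Real.sin_arctan]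
  have hs : ((Real.sqrt (1 + x ^ 2) : ℝ) : ℂ) ≠ 0 := by
    simp only [ne_eq, Complex.ofReal_eq_zero]
    positivity
  push_cast
  field_simp
  ring

lemma hreal (m ε : ℝ) (n : ℕ) (hn : 0 < n) :
    ((1 + m ^ 2 * ε ^ 2) ^ ((1 - (n : ℝ)) / 2) * Real.sqrt (1 + (m * ε) ^ 2) ^ (n - 1) : ℝ) = 1 := by
  have hxx : 1 + m ^ 2 * ε ^ 2 = 1 + (m * ε) ^ 2 := by ring
  have hA : (0 : ℝ) < 1 + (m * ε) ^ 2 := by positivity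
  have hcast : (((n - 1 : ℕ)) : ℝ) = (n : ℝ) - 1 := by
    have h1 : (1 : ℕ) ≤ n := hn
    push_cast [h1]
    ring
  rw [hxx, ← Real.rpow_natCast (Real.sqrt (1 + (m * ε) ^ 2)) (n - 1), Real.sqrt_eq_rpow,
    ← Real.rpow_mul hA.le, ← Real.rpow_add hA, hcast,
    show (1 - (n : ℝ)) / 2 + 1 / 2 * ((n : ℝ) - 1) = 0 by ring, Real.rpow_zero]

/-- For `t = εn ∈ εℤ₊`, `Σ_x a(x,t,m,ε) = i·exp(−i·((t−ε)/ε)·arctan(mε))`. -/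
theorem stmt5 (m ε : ℝ) (hε : 0 < ε) (hm : 0 ≤ m) (t : ℝ) (n : ℕ) (hn : 0 < n)
    (ht : t = ε * n) :
    ∑' X : ℤ, fcAmp m ε X n
      = Complex.I * Complex.exp (-Complex.I * (((t - ε) / ε : ℝ) : ℂ)
          * ((Real.arctan (m * ε) : ℝ) : ℂ)) := by
  classical
  have hsupp : ∀ X : ℤ, X ∉ Finset.Icc (-(n : ℤ)) n → fcAmp m ε X n = 0 := by
    intro X hX
    have hpaths : fcPaths n X = ∅ := by
      rw [Finset.eq_empty_iff_forall_notMem]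
      intro f hf
      rw [fcPaths_eq, Finset.mem_filter] at hf
      have h := abs_fcPos_le f
      rw [hf.2] at h
      have h2 := abs_le.mp h
      simp only [Finset.mem_Icc, not_and_or, not_le] at hX
      omega
    simp [fcAmp, hpaths]
  rw [tsum_eq_sum hsupp]
  have hmaps : ∀ f ∈ fcS n, fcPos f n ∈ Finset.Icc (-(n : ℤ)) n := by
    intro f _
    have h := abs_le.mp (abs_fcPos_le f)
    rw [Finset.mem_Icc]
    omega
  have hsum : ∑ X ∈ Finset.Icc (-(n : ℤ)) n, fcAmp m ε X n
      = (((1 + m ^ 2 * ε ^ 2) ^ ((1 - (n : ℝ)) / 2) : ℝ) : ℂ) * Complex.I *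
        ∑ f ∈ fcS n, (-Complex.I * (m * ε)) ^ fcTurns f := by
    rw [← Finset.sum_fiberwise_of_maps_to hmaps
      (fun f => (-Complex.I * ((m : ℂ) * ε)) ^ fcTurns f), Finset.mul_sum]
    apply Finset.sum_congr rfl
    intro X _
    rw [fcAmp, fcPaths_eq]
  rw [hsum, sum_fcS]
  -- exponent: (t-ε)/ε = n-1
  have hexp : (((t - ε) / ε : ℝ) : ℂ) = ((n - 1 : ℕ) : ℂ) := by
    have h1 : (t - ε) / ε = (n : ℝ) - 1 := by
      rw [ht]; field_simp
    have h2 : (((n - 1 : ℕ)) : ℝ) = (n : ℝ) - 1 := by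
      have : (1 : ℕ) ≤ n := hn
      push_cast [this]; ring
    rw [h1, ← h2]
    push_cast
    ring
  rw [hexp]
  have hE' : Complex.exp (-Complex.I * ((n - 1 : ℕ) : ℂ) * ((Real.arctan (m * ε) : ℝ) : ℂ))
      = Complex.exp (-Complex.I * ((Real.arctan (m * ε) : ℝ) : ℂ)) ^ (n - 1) := by
    rw [← Complex.exp_nat_mul]
    ring_nf
  rw [hE']
  have key : (-Complex.I * ((m : ℂ) * ε) + 1) ^ (n - 1)
      = ((Real.sqrt (1 + (m * ε) ^ 2) ^ (n - 1) : ℝ) : ℂ) *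
        Complex.exp (-Complex.I * ((Real.arctan (m * ε) : ℝ) : ℂ)) ^ (n - 1) := by
    rw [Complex.ofReal_pow, ← mul_pow, hE (m * ε)]
    congr 1
    push_cast
    ring
  rw [key]
  rw [show (((1 + m ^ 2 * ε ^ 2) ^ ((1 - (n : ℝ)) / 2) : ℝ) : ℂ) * Complex.I *
      (((Real.sqrt (1 + (m * ε) ^ 2) ^ (n - 1) : ℝ) : ℂ) *
        Complex.exp (-Complex.I * ((Real.arctan (m * ε) : ℝ) : ℂ)) ^ (n - 1))
      = ((((1 + m ^ 2 * ε ^ 2) ^ ((1 - (n : ℝ)) / 2) * Real.sqrt (1 + (m * ε) ^ 2) ^ (n - 1) : ℝ)) : ℂ) *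
        (Complex.I * Complex.exp (-Complex.I * ((Real.arctan (m * ε) : ℝ) : ℂ)) ^ (n - 1)) by
      push_cast; ring]
  rw [hreal m ε n hn, Complex.ofReal_one, one_mul]
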